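/- Let Y = F_2[R_{ij} : 0 ≤ i < j, (i,j) ≠ (n, n+1)] with maps δ_1 and δ_2 defined on generators by: δ_1(R_{ij}) = Σ_{i<k<j} R_{ik}R_{kj} if i ≠ n and j ≠ n+1; δ_1(R_{i,n+1}) = Σ_{i<k<n} R_{ik}R_{k,n+1} and δ_2(R_{i,n+1}) = R_{in} for i < n; δ_1(R_{nj}) = Σ_{n+1<k<j} R_{nk}R_{kj} and δ_2(R_{nj}) = R_{n+1,j} for j > n+1; with δ_2 vanishing on other generators, and both extended as derivations. Then d_Y := δ_1 + δ_2 satisfies d_Y² = 0, and under the identification X = Y[R_{n,n+1}], the differential of X equals δ_1 + R_{n,n+1}·δ_2 on Y. -/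
import Mathlib


set_option synthInstance.maxHeartbeats 1000000
set_option maxHeartbeats 1000000

open MvPolynomial Finset

/-- Index type for the generators `R_{ij}`, `0 ≤ i < j`. -/
abbrev SigmaX : Type := {p : ℕ × ℕ // p.1 < p.2}

/-- The polynomial algebra `X = F₂[R_{ij} : 0 ≤ i < j]`. -/
abbrev Xalg : Type := MvPolynomial SigmaX (ZMod 2)

/-- The generator `R_{ij}` of `X` (with the convention `R_{ij} = 0` when `i ≥ j`). -/
noncomputable def Rgen (i j : ℕ) : Xalg :=
  if h : i < j then X ⟨(i, j), h⟩ else 0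

/-- The differential of `X`, determined on generators by
`d R_{ij} = ∑_{i<k<j} R_{ik} R_{kj}` and extended as an `F₂`-linear derivation. -/
noncomputable def dX : Derivation (ZMod 2) Xalg Xalg :=
  mkDerivation (ZMod 2)
    (fun p : SigmaX => ∑ k ∈ Finset.Ioo p.1.1 p.1.2, Rgen p.1.1 k * Rgen k p.1.2)

/-- Index type for the generators of `Y`: all `R_{ij}` with `0 ≤ i < j` except `R_{n,n+1}`. -/
abbrev SigmaY (n : ℕ) : Type := {p : SigmaX // p.1 ≠ (n, n + 1)}

/-- `Y = F₂[R_{ij} : 0 ≤ i < j, (i,j) ≠ (n,n+1)]`. -/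
abbrev Yalg (n : ℕ) : Type := MvPolynomial (SigmaY n) (ZMod 2)

/-- The generator `R_{ij}` of `Y` (zero when `i ≥ j` or `(i,j) = (n,n+1)`). -/
noncomputable def RgenY (n i j : ℕ) : Yalg n :=
  if h : i < j ∧ (i, j) ≠ (n, n + 1) then X ⟨⟨(i, j), h.1⟩, h.2⟩ else 0

/-- The value of `δ₁` on the generator `R_{ij}` of `Y`. -/
noncomputable def delta1Gen (n : ℕ) (p : SigmaY n) : Yalg n :=
  let i := p.1.1.1
  let j := p.1.1.2
  if j = n + 1 then ∑ k ∈ Finset.Ioo i n, RgenY n i k * RgenY n k (n + 1)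
  else if i = n then ∑ k ∈ Finset.Ioo (n + 1) j, RgenY n n k * RgenY n k j
  else ∑ k ∈ Finset.Ioo i j, RgenY n i k * RgenY n k j

/-- The value of `δ₂` on the generator `R_{ij}` of `Y`. -/
noncomputable def delta2Gen (n : ℕ) (p : SigmaY n) : Yalg n :=
  let i := p.1.1.1
  let j := p.1.1.2
  if j = n + 1 then RgenY n i n
  else if i = n then RgenY n (n + 1) j
  else 0

/-- The derivation `δ₁` of `Y`. -/
noncomputable def delta1 (n : ℕ) : Derivation (ZMod 2) (Yalg n) (Yalg n) :=
  mkDerivation (ZMod 2) (delta1Gen n)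

/-- The derivation `δ₂` of `Y`. -/
noncomputable def delta2 (n : ℕ) : Derivation (ZMod 2) (Yalg n) (Yalg n) :=
  mkDerivation (ZMod 2) (delta2Gen n)

/-- The inclusion `Y → X` (so that `X = Y[R_{n,n+1}]`). -/
noncomputable def inclY (n : ℕ) : Yalg n →ₐ[ZMod 2] Xalg :=
  rename (fun q : SigmaY n => q.1)

lemma dX_X (i j : ℕ) (h : i < j) :
    dX (X ⟨(i, j), h⟩) = ∑ k ∈ Finset.Ioo i j, Rgen i k * Rgen k j :=
  mkDerivation_X _ _ _

lemma Rgen_pos (i j : ℕ) (h : i < j) : Rgen i j = X ⟨(i, j), h⟩ := dif_pos h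

lemma Rgen_neg (i j : ℕ) (h : ¬ i < j) : Rgen i j = 0 := dif_neg h

lemma dX_Rgen (i j : ℕ) :
    dX (Rgen i j) = ∑ k ∈ Finset.Ioo i j, Rgen i k * Rgen k j := by
  by_cases h : i < j
  · rw [Rgen_pos i j h, dX_X]
  · rw [Rgen_neg i j h, map_zero, Finset.Ioo_eq_empty h, Finset.sum_empty]

lemma incl_RgenY (n a b : ℕ) (hne : (a, b) ≠ (n, n + 1)) :
    inclY n (RgenY n a b) = Rgen a b := by
  unfold RgenY Rgen inclY
  by_cases h : a < b
  · rw [dif_pos ⟨h, hne⟩, dif_pos h, rename_X]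
  · rw [dif_neg (by tauto), dif_neg h, map_zero]

lemma key (n : ℕ) (p : SigmaY n) :
    dX (inclY n (X p)) = inclY n (delta1Gen n p) + Rgen n (n + 1) * inclY n (delta2Gen n p) := by
  obtain ⟨⟨⟨i, j⟩, hij⟩, hne⟩ := p
  have hL : inclY n (X (⟨⟨(i, j), hij⟩, hne⟩ : SigmaY n)) = X (⟨(i, j), hij⟩ : SigmaX) :=
    rename_X _ _
  rw [hL, dX_X]
  by_cases hj : j = n + 1
  · subst hj
    have hi_ne : i ≠ n := fun h => hne (by simp [h])
    have hin : i < n := by omega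
    have hd1 : delta1Gen n ⟨⟨(i, n + 1), hij⟩, hne⟩
        = ∑ k ∈ Finset.Ioo i n, RgenY n i k * RgenY n k (n + 1) := by
      simp [delta1Gen]
    have hd2 : delta2Gen n ⟨⟨(i, n + 1), hij⟩, hne⟩ = RgenY n i n := by
      simp [delta2Gen]
    rw [hd1, hd2]
    have hins : Finset.Ioo i (n + 1) = insert n (Finset.Ioo i n) := by
      ext x; simp only [Finset.mem_insert, Finset.mem_Ioo]; omega
    rw [hins, Finset.sum_insert (by simp), map_sum, incl_RgenY n i n (by simp [hi_ne])]
    have hterms : ∀ k ∈ Finset.Ioo i n,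
        inclY n (RgenY n i k * RgenY n k (n + 1)) = Rgen i k * Rgen k (n + 1) := by
      intro k hk
      rw [Finset.mem_Ioo] at hk
      rw [map_mul, incl_RgenY n i k (by simp only [ne_eq, Prod.mk.injEq, not_and]; omega),
        incl_RgenY n k (n + 1) (by simp only [ne_eq, Prod.mk.injEq, not_and]; omega)]
    rw [Finset.sum_congr rfl hterms]
    ring
  · by_cases hi : i = n
    · subst hi
      have hij' : i < j := hij
      have hj2 : i + 1 < j := by omega
      have hd1 : delta1Gen i ⟨⟨(i, j), hij⟩, hne⟩
          = ∑ k ∈ Finset.Ioo (i + 1) j, RgenY i i k * RgenY i k j := by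
        simp [delta1Gen, hj]
      have hd2 : delta2Gen i ⟨⟨(i, j), hij⟩, hne⟩ = RgenY i (i + 1) j := by
        simp [delta2Gen, hj]
      rw [hd1, hd2]
      have hins : Finset.Ioo i j = insert (i + 1) (Finset.Ioo (i + 1) j) := by
        ext x; simp only [Finset.mem_insert, Finset.mem_Ioo]; omega
      rw [hins, Finset.sum_insert (by simp), map_sum,
        incl_RgenY i (i + 1) j (by simp)]
      have hterms : ∀ k ∈ Finset.Ioo (i + 1) j,
          inclY i (RgenY i i k * RgenY i k j) = Rgen i k * Rgen k j := by
        intro k hk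
        rw [Finset.mem_Ioo] at hk
        rw [map_mul, incl_RgenY i i k (by simp only [ne_eq, Prod.mk.injEq, not_and]; omega),
          incl_RgenY i k j (by simp only [ne_eq, Prod.mk.injEq, not_and]; omega)]
      rw [Finset.sum_congr rfl hterms]
      ring
    · have hd1 : delta1Gen n ⟨⟨(i, j), hij⟩, hne⟩
          = ∑ k ∈ Finset.Ioo i j, RgenY n i k * RgenY n k j := by
        simp [delta1Gen, hj, hi]
      have hd2 : delta2Gen n ⟨⟨(i, j), hij⟩, hne⟩ = 0 := by
        simp [delta2Gen, hj, hi]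
      rw [hd1, hd2]
      simp only [map_sum, map_zero, mul_zero, add_zero]
      refine (Finset.sum_congr rfl fun k hk => ?_).symm
      rw [Finset.mem_Ioo] at hk
      rw [map_mul, incl_RgenY n i k (by simp [hi]), incl_RgenY n k j (by simp [hj])]

lemma decomp (n : ℕ) (y : Yalg n) :
    dX (inclY n y) = inclY n (delta1 n y) + Rgen n (n + 1) * inclY n (delta2 n y) := by
  induction y using MvPolynomial.induction_on with
  | C a => simp [delta1, delta2]
  | add p q hp hq => simp only [map_add, hp, hq]; ring
  | mul_X p i hp =>
    have k1 : delta1 n (p * X i) = p * delta1Gen n i + X i * delta1 n p := by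
      rw [Derivation.leibniz, smul_eq_mul, smul_eq_mul]
      simp only [delta1, mkDerivation_X]
    have k2 : delta2 n (p * X i) = p * delta2Gen n i + X i * delta2 n p := by
      rw [Derivation.leibniz, smul_eq_mul, smul_eq_mul]
      simp only [delta2, mkDerivation_X]
    rw [map_mul, Derivation.leibniz, smul_eq_mul, smul_eq_mul, hp, key n i, k1, k2,
      map_add, map_add, map_mul, map_mul, map_mul, map_mul]
    ring

/-- square of a derivation in char 2 -/
noncomputable def sqD {σ : Type} (D : Derivation (ZMod 2) (MvPolynomial σ (ZMod 2))
    (MvPolynomial σ (ZMod 2))) :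
    Derivation (ZMod 2) (MvPolynomial σ (ZMod 2)) (MvPolynomial σ (ZMod 2)) where
  toLinearMap := D.toLinearMap ∘ₗ D.toLinearMap
  map_one_eq_zero' := by simp
  leibniz' a b := by
    have h2 : ∀ x : MvPolynomial σ (ZMod 2), x + x = 0 := CharTwo.add_self_eq_zero
    show D (D (a * b)) = a • D (D b) + b • D (D a)
    rw [Derivation.leibniz]
    simp only [smul_eq_mul, map_add, Derivation.leibniz]
    linear_combination h2 (D a * D b)

lemma dXsq_X (p : SigmaX) : dX (dX (X p)) = 0 := by
  obtain ⟨⟨i, j⟩, hij⟩ := p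
  rw [dX_X, map_sum]
  have step : ∀ k, dX (Rgen i k * Rgen k j)
      = (∑ l ∈ Finset.Ioo i k, Rgen i l * Rgen l k) * Rgen k j
      + Rgen i k * (∑ l ∈ Finset.Ioo k j, Rgen k l * Rgen l j) := by
    intro k
    rw [Derivation.leibniz, smul_eq_mul, smul_eq_mul, dX_Rgen, dX_Rgen]; ring
  rw [Finset.sum_congr rfl (fun k _ => step k), Finset.sum_add_distrib]
  have e1 : ∑ k ∈ Finset.Ioo i j, (∑ l ∈ Finset.Ioo i k, Rgen i l * Rgen l k) * Rgen k j
      = ∑ k ∈ Finset.Ioo i j, ∑ l ∈ Finset.Ioo i j,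
          (if l < k then Rgen i l * Rgen l k * Rgen k j else 0) := by
    refine Finset.sum_congr rfl fun k hk => ?_
    have hk' := Finset.mem_Ioo.1 hk
    rw [Finset.sum_mul]
    have hf : Finset.Ioo i k = (Finset.Ioo i j).filter (· < k) := by
      ext x; simp only [Finset.mem_Ioo, Finset.mem_filter]; omega
    rw [hf, Finset.sum_filter]
  have e2 : ∑ k ∈ Finset.Ioo i j, Rgen i k * (∑ l ∈ Finset.Ioo k j, Rgen k l * Rgen l j)
      = ∑ k ∈ Finset.Ioo i j, ∑ l ∈ Finset.Ioo i j,
          (if k < l then Rgen i k * Rgen k l * Rgen l j else 0) := by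
    refine Finset.sum_congr rfl fun k hk => ?_
    have hk' := Finset.mem_Ioo.1 hk
    rw [Finset.mul_sum]
    have hf : Finset.Ioo k j = (Finset.Ioo i j).filter (k < ·) := by
      ext x; simp only [Finset.mem_Ioo, Finset.mem_filter]; omega
    rw [hf, Finset.sum_filter]
    refine Finset.sum_congr rfl fun l _ => ?_
    split <;> ring
  rw [e1, e2, Finset.sum_comm]
  exact CharTwo.add_self_eq_zero _

lemma dX_dX (x : Xalg) : dX (dX x) = 0 := by
  have h : sqD dX = 0 := derivation_ext fun p => dXsq_X p
  have := DFunLike.congr_fun h x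
  simpa [sqD] using this

/- ## The equivalence X ≃ Y[T] -/

noncomputable def optEquiv (n : ℕ) : Option (SigmaY n) ≃ SigmaX where
  toFun o := o.elim ⟨(n, n + 1), Nat.lt_succ_self n⟩ (fun q => q.1)
  invFun p := if h : p.1 = (n, n + 1) then none else some ⟨p, h⟩
  left_inv o := by
    cases o with
    | none => simp
    | some q => simp [q.2]
  right_inv p := by
    by_cases h : p.1 = (n, n + 1)
    · simp only [dif_pos h, Option.elim]
      exact Subtype.ext h.symm
    · simp [h]

noncomputable def Eeq (n : ℕ) : Xalg ≃ₐ[ZMod 2] Polynomial (Yalg n) :=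
  (renameEquiv (ZMod 2) (optEquiv n).symm).trans (optionEquivLeft (ZMod 2) (SigmaY n))

lemma Eeq_X_Y (n : ℕ) (q : SigmaY n) : Eeq n (X q.1) = Polynomial.C (X q) := by
  have h : (optEquiv n).symm q.1 = some q := by
    rw [Equiv.symm_apply_eq]; rfl
  simp [Eeq, renameEquiv_apply, rename_X, h, optionEquivLeft_X_some]

lemma Eeq_incl (n : ℕ) (y : Yalg n) : Eeq n (inclY n y) = Polynomial.C y := by
  induction y using MvPolynomial.induction_on with
  | C a => simp [inclY, Eeq, optionEquivLeft_C]
  | add p q hp hq => simp [map_add, hp, hq]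
  | mul_X p q hp =>
    rw [map_mul, map_mul, hp]
    have : inclY n (X q) = X q.1 := rename_X _ _
    rw [map_mul, this, Eeq_X_Y]

lemma Eeq_R (n : ℕ) : Eeq n (Rgen n (n + 1)) = Polynomial.X := by
  have h : (optEquiv n).symm ⟨(n, n + 1), Nat.lt_succ_self n⟩ = none := by
    rw [Equiv.symm_apply_eq]; rfl
  simp [Rgen, Eeq, renameEquiv_apply, rename_X, h, optionEquivLeft_X_none]

lemma extract (n : ℕ) (a b c : Yalg n)
    (h : inclY n a + Rgen n (n + 1) * inclY n b
      + Rgen n (n + 1) * Rgen n (n + 1) * inclY n c = 0) :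
    a = 0 ∧ b = 0 ∧ c = 0 := by
  have h2 := congrArg (Eeq n) h
  rw [map_add, map_add, map_mul, map_mul, map_mul, Eeq_incl, Eeq_incl, Eeq_incl, Eeq_R,
    map_zero] at h2
  have h3 : Polynomial.C a + Polynomial.C b * Polynomial.X
      + Polynomial.C c * Polynomial.X ^ 2 = 0 := by linear_combination h2
  refine ⟨?_, ?_, ?_⟩
  · have := congrArg (fun q => Polynomial.coeff q 0) h3
    simpa using this
  · have := congrArg (fun q => Polynomial.coeff q 1) h3
    simpa using this
  · have := congrArg (fun q => Polynomial.coeff q 2) h3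
    simpa using this

/-- `d_Y = δ₁ + δ₂` squares to zero, and under the identification `X = Y[R_{n,n+1}]` the
differential of `X` equals `δ₁ + R_{n,n+1} · δ₂` on `Y`. -/
theorem dY_squared_and_dX_decomposition (n : ℕ) :
    (∀ y : Yalg n, (delta1 n + delta2 n) ((delta1 n + delta2 n) y) = 0) ∧
    (∀ y : Yalg n,
      dX (inclY n y) = inclY n (delta1 n y) + Rgen n (n + 1) * inclY n (delta2 n y)) := by
  refine ⟨?_, decomp n⟩
  intro y
  have dXR : dX (Rgen n (n + 1)) = 0 := by
    have he : Finset.Ioo n (n + 1) = ∅ := by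
      ext x; simp only [Finset.mem_Ioo, Finset.notMem_empty, iff_false]; omega
    rw [dX_Rgen, he, Finset.sum_empty]
  have h0 : dX (dX (inclY n y)) = 0 := dX_dX _
  rw [decomp n y, map_add, Derivation.leibniz, dXR, smul_zero, add_zero, smul_eq_mul,
    decomp n (delta1 n y), decomp n (delta2 n y)] at h0
  have h1 : inclY n (delta1 n (delta1 n y))
      + Rgen n (n + 1) * inclY n (delta2 n (delta1 n y) + delta1 n (delta2 n y))
      + Rgen n (n + 1) * Rgen n (n + 1) * inclY n (delta2 n (delta2 n y)) = 0 := by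
    rw [map_add]; linear_combination h0
  obtain ⟨e1, e2, e3⟩ := extract n _ _ _ h1
  simp only [Derivation.add_apply, map_add]
  linear_combination e1 + e2 + e3
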